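/- arXiv:1712.09988 — 3 statements merged into one kernel-verified Lean document; each statement's English description precedes it below -/
import Mathlib

section
/- Let Q̃ and Q̂ be symmetric positive semidefinite d×d matrices, T ⊆ {1,…,d} with |T| = s, c̄ ≥ 1, and suppose the restricted eigenvalue κ = κ(Q̃,T,c̄) := min over nonzero δ with ‖δ_{T^c}‖₁ ≤ c̄‖δ_T‖₁ of (√s · √(δᵀQ̃δ)) / ‖δ_T‖₁ is positive. Let q = max_{m,j} |Q̂_{m,j} − Q̃_{m,j}|. Then for every δ in the restricted set RE(c̄), (1 − q(1+c̄)²s/κ²) · δᵀQ̃δ ≤ δᵀQ̂δ ≤ (1 + q(1+c̄)²s/κ²) · δᵀQ̃δ. -/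
open Matrix Finset

/-- The restriction of a vector `δ` to a coordinate set `T` (zero outside `T`). -/
def restr {d : ℕ} (T : Finset (Fin d)) (δ : Fin d → ℝ) : Fin d → ℝ :=
  fun j => if j ∈ T then δ j else 0

/-- The ℓ₁ norm of a vector in `ℝ^d`. -/
def l1norm {d : ℕ} (δ : Fin d → ℝ) : ℝ := ∑ j, |δ j|

/-- The restricted cone `RE(c̄)`: nonzero vectors with `‖δ_{Tᶜ}‖₁ ≤ c̄ ‖δ_T‖₁`. -/
def inRE {d : ℕ} (T : Finset (Fin d)) (cbar : ℝ) (δ : Fin d → ℝ) : Prop :=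
  δ ≠ 0 ∧ l1norm (restr Tᶜ δ) ≤ cbar * l1norm (restr T δ)

/-- `κ` is a restricted-eigenvalue lower bound for `Q̃` on `RE(c̄)`:
`κ ‖δ_T‖₁ ≤ √s √(δᵀ Q̃ δ)` for all `δ` in the cone, where `s = |T|`. -/
def isREconst {d : ℕ} (Qt : Matrix (Fin d) (Fin d) ℝ) (T : Finset (Fin d))
    (cbar κ : ℝ) : Prop :=
  ∀ δ : Fin d → ℝ, inRE T cbar δ →
    κ * l1norm (restr T δ) ≤ Real.sqrt (T.card) * Real.sqrt (δ ⬝ᵥ Qt.mulVec δ)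

/-- Equivalence of the quadratic forms of `Q̂` and `Q̃` on the restricted cone,
up to the factor `q (1+c̄)² s / κ²` governed by the entrywise perturbation `q`. -/
theorem stmt_4 {d : ℕ} (Qt Qhat : Matrix (Fin d) (Fin d) ℝ)
    (hQt : Qt.PosSemidef) (hQhat : Qhat.PosSemidef)
    (T : Finset (Fin d)) (s : ℕ) (hs : T.card = s)
    (cbar : ℝ) (hcbar : 1 ≤ cbar)
    (κ : ℝ) (hκ : 0 < κ) (hRE : isREconst Qt T cbar κ)
    (q : ℝ) (hq : ∀ m j, |Qhat m j - Qt m j| ≤ q) :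
    ∀ δ : Fin d → ℝ, inRE T cbar δ →
      (1 - q * (1 + cbar) ^ 2 * s / κ ^ 2) * (δ ⬝ᵥ Qt.mulVec δ)
        ≤ δ ⬝ᵥ Qhat.mulVec δ ∧
      δ ⬝ᵥ Qhat.mulVec δ
        ≤ (1 + q * (1 + cbar) ^ 2 * s / κ ^ 2) * (δ ⬝ᵥ Qt.mulVec δ) := by
  intro δ hδ
  obtain ⟨hδ0, hcone⟩ := hδ
  obtain ⟨m0, hm0⟩ := Function.ne_iff.mp hδ0
  have hq0 : 0 ≤ q := le_trans (abs_nonneg _) (hq m0 m0)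
  set A := δ ⬝ᵥ Qt.mulVec δ with hA
  set B := δ ⬝ᵥ Qhat.mulVec δ with hB
  have hA0 : 0 ≤ A := by simpa using hQt.dotProduct_mulVec_nonneg δ
  set t := l1norm (restr T δ) with ht
  have ht0 : 0 ≤ t := Finset.sum_nonneg fun j _ => abs_nonneg _
  -- split of the l1 norm
  have hl1 : l1norm δ ≤ (1 + cbar) * t := by
    have hsplit : l1norm δ = t + l1norm (restr Tᶜ δ) := by
      simp only [l1norm, ht, ← Finset.sum_add_distrib]
      refine Finset.sum_congr rfl fun j _ => ?_
      by_cases hj : j ∈ T <;> simp [restr, hj]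
    have := hcone
    nlinarith
  have hl10 : 0 ≤ l1norm δ := Finset.sum_nonneg fun j _ => abs_nonneg _
  -- RE gives κ² t² ≤ s A
  have hREδ := hRE δ ⟨hδ0, hcone⟩
  have hsq : κ ^ 2 * t ^ 2 ≤ (s : ℝ) * A := by
    have h1 : (κ * t) * (κ * t) ≤ (Real.sqrt (T.card) * Real.sqrt A) * (Real.sqrt (T.card) * Real.sqrt A) :=
      mul_self_le_mul_self (mul_nonneg hκ.le ht0) hREδ
    have h2 : (Real.sqrt (T.card) * Real.sqrt A) * (Real.sqrt (T.card) * Real.sqrt A) = (s : ℝ) * A := by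
      rw [mul_mul_mul_comm, Real.mul_self_sqrt (by positivity), Real.mul_self_sqrt hA0, hs]
    nlinarith
  -- perturbation bound
  have key : |B - A| ≤ q * l1norm δ ^ 2 := by
    have hBA : B - A = ∑ m, ∑ j, δ m * ((Qhat m j - Qt m j) * δ j) := by
      simp only [hA, hB, dotProduct, mulVec, Finset.mul_sum, ← Finset.sum_sub_distrib]
      refine Finset.sum_congr rfl fun m _ => Finset.sum_congr rfl fun j _ => by ring
    rw [hBA]
    calc |∑ m, ∑ j, δ m * ((Qhat m j - Qt m j) * δ j)|
        ≤ ∑ m, |∑ j, δ m * ((Qhat m j - Qt m j) * δ j)| := Finset.abs_sum_le_sum_abs _ _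
      _ ≤ ∑ m, ∑ j, |δ m * ((Qhat m j - Qt m j) * δ j)| :=
          Finset.sum_le_sum fun m _ => Finset.abs_sum_le_sum_abs _ _
      _ ≤ ∑ m, ∑ j, |δ m| * (q * |δ j|) := by
          refine Finset.sum_le_sum fun m _ => Finset.sum_le_sum fun j _ => ?_
          rw [abs_mul, abs_mul]
          exact mul_le_mul_of_nonneg_left
            (mul_le_mul_of_nonneg_right (hq m j) (abs_nonneg _)) (abs_nonneg _)
      _ = q * l1norm δ ^ 2 := by
          simp only [l1norm]
          rw [sq]
          rw [Finset.sum_mul_sum]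
          rw [Finset.mul_sum]
          refine Finset.sum_congr rfl fun m _ => ?_
          rw [Finset.mul_sum]
          refine Finset.sum_congr rfl fun j _ => by ring
  have hE : |B - A| ≤ q * (1 + cbar) ^ 2 * t ^ 2 := by
    calc |B - A| ≤ q * l1norm δ ^ 2 := key
      _ ≤ q * ((1 + cbar) * t) ^ 2 := by
          apply mul_le_mul_of_nonneg_left _ hq0
          exact pow_le_pow_left₀ hl10 hl1 2
      _ = q * (1 + cbar) ^ 2 * t ^ 2 := by ring
  have hfinal : |B - A| ≤ q * (1 + cbar) ^ 2 * s / κ ^ 2 * A := by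
    rw [div_mul_eq_mul_div, le_div_iff₀ (pow_pos hκ 2)]
    have h3 : q * (1 + cbar) ^ 2 * (κ ^ 2 * t ^ 2) ≤ q * (1 + cbar) ^ 2 * ((s : ℝ) * A) :=
      mul_le_mul_of_nonneg_left hsq (by positivity)
    nlinarith [abs_nonneg (B - A)]
  have habs := abs_le.mp hfinal
  constructor <;> nlinarith [habs.1, habs.2]
end

section
/- Consider the Lasso objective with penalty λ > 0: β̂ minimizes Q̂(b) + λ‖b‖₁ where Q̂(b) = (1/N)Σᵢ(yᵢ − xᵢᵀb)². Suppose the true parameter β₀ is supported on T, and suppose λ ≥ c‖S‖_∞ for some c > 1, where S = 2·(1/N)Σᵢ xᵢ(yᵢ − xᵢᵀβ₀) is the gradient of Q̂ at β₀. Then the error δ = β̂ − β₀ satisfies ‖δ_{T^c}‖₁ ≤ ((c+1)/(c−1))·‖δ_T‖₁. -/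
open Matrix Finset

/-- The least-squares objective `Q̂(b) = (1/N) Σᵢ (yᵢ − xᵢᵀb)²`. -/
noncomputable def lsObj {N d : ℕ} (x : Fin N → Fin d → ℝ) (y : Fin N → ℝ)
    (b : Fin d → ℝ) : ℝ :=
  (1 / (N : ℝ)) * ∑ i, (y i - x i ⬝ᵥ b) ^ 2

/-- The score `S = 2 (1/N) Σᵢ xᵢ (yᵢ − xᵢᵀβ₀)`. -/
noncomputable def score {N d : ℕ} (x : Fin N → Fin d → ℝ) (y : Fin N → ℝ)
    (β₀ : Fin d → ℝ) : Fin d → ℝ :=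
  fun j => 2 * ((1 / (N : ℝ)) * ∑ i, x i j * (y i - x i ⬝ᵥ β₀))

/-- Restricted-set (cone) property of the Lasso error: if `β̂` minimizes the
penalized objective, `β₀` is supported on `T`, and `λ ≥ c ‖S‖_∞` with `c > 1`,
then `δ = β̂ − β₀` satisfies `‖δ_{Tᶜ}‖₁ ≤ ((c+1)/(c−1)) ‖δ_T‖₁`. -/
theorem stmt_6 {N d : ℕ} (x : Fin N → Fin d → ℝ) (y : Fin N → ℝ)
    (β₀ βhat : Fin d → ℝ) (T : Finset (Fin d))
    (hsupp : ∀ j, β₀ j ≠ 0 → j ∈ T)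
    (lam c : ℝ) (hlam : 0 < lam) (hc : 1 < c)
    (hscore : ∀ j, c * |score x y β₀ j| ≤ lam)
    (hmin : ∀ b : Fin d → ℝ,
      lsObj x y βhat + lam * l1norm βhat ≤ lsObj x y b + lam * l1norm b) :
    l1norm (restr Tᶜ (βhat - β₀)) ≤ ((c + 1) / (c - 1)) * l1norm (restr T (βhat - β₀)) := by
  have hc0 : (0:ℝ) < c := by linarith
  set δ : Fin d → ℝ := βhat - β₀ with hδ
  set a := l1norm (restr Tᶜ δ) with ha
  set b := l1norm (restr T δ) with hb
  have hδj : ∀ j, δ j = βhat j - β₀ j := fun j => rfl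
  -- splitting of the l1 norm
  have hab : l1norm δ = b + a := by
    rw [ha, hb]
    simp only [l1norm, restr, ← Finset.sum_add_distrib]
    refine Finset.sum_congr rfl fun j _ => ?_
    by_cases h : j ∈ T <;> simp [h]
  -- key algebraic identity
  have key : lsObj x y β₀ - lsObj x y βhat + (1/(N:ℝ)) * ∑ i, (∑ j, x i j * δ j)^2
      = ∑ j, score x y β₀ j * δ j := by
    simp only [lsObj, score, dotProduct]
    have h1 : ∀ i, (y i - ∑ j, x i j * βhat j)
        = (y i - ∑ j, x i j * β₀ j) - ∑ j, x i j * δ j := by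
      intro i
      simp only [hδj, mul_sub, Finset.sum_sub_distrib]
      ring
    have h2 : ∑ j, (2 * ((1/(N:ℝ)) * ∑ i, x i j * (y i - ∑ k, x i k * β₀ k))) * δ j
        = (1/(N:ℝ)) * ∑ i, (2 * (y i - ∑ k, x i k * β₀ k) * ∑ j, x i j * δ j) := by
      simp only [Finset.mul_sum, Finset.sum_mul]
      rw [Finset.sum_comm]
      exact Finset.sum_congr rfl fun i _ => Finset.sum_congr rfl fun j _ => by ring
    rw [h2]
    simp only [h1]
    rw [← mul_sub, ← mul_add, ← Finset.sum_sub_distrib, ← Finset.sum_add_distrib]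
    congr 1
    exact Finset.sum_congr rfl fun i _ => by ring
  -- bound on the linear term
  have hlin : ∑ j, score x y β₀ j * δ j ≤ (lam / c) * (b + a) := by
    rw [← hab]
    simp only [l1norm, Finset.mul_sum]
    refine Finset.sum_le_sum fun j _ => ?_
    have h1 : |score x y β₀ j| ≤ lam / c := by
      rw [le_div_iff₀ hc0]; nlinarith [hscore j]
    calc score x y β₀ j * δ j ≤ |score x y β₀ j * δ j| := le_abs_self _
      _ = |score x y β₀ j| * |δ j| := abs_mul _ _
      _ ≤ (lam / c) * |δ j| := by
          exact mul_le_mul_of_nonneg_right h1 (abs_nonneg _)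
  have hsq : 0 ≤ (1/(N:ℝ)) * ∑ i, (∑ j, x i j * δ j)^2 := by
    positivity
  have hQ : lsObj x y β₀ - lsObj x y βhat ≤ (lam / c) * (b + a) := by
    nlinarith [key, hlin, hsq]
  -- l1 norm comparison
  have hl1 : l1norm β₀ - b + a ≤ l1norm βhat := by
    simp only [l1norm, hb, ha, restr]
    rw [← Finset.sum_sub_distrib, ← Finset.sum_add_distrib]
    refine Finset.sum_le_sum fun j _ => ?_
    by_cases h : j ∈ T
    · simp only [h, if_pos, Finset.mem_compl, not_true, if_neg, ite_true]
      simp [h]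
      have := abs_sub_abs_le_abs_sub (β₀ j) (βhat j)
      have h2 : |δ j| = |βhat j - β₀ j| := by rw [hδj]
      rw [abs_sub_comm] at this
      linarith [h2 ▸ this]
    · have hβ0 : β₀ j = 0 := by
        by_contra hne; exact h (hsupp j hne)
      simp [h, hβ0, hδj]
  have hm := hmin β₀
  -- combine
  have hfin : c * (a - b) ≤ a + b := by
    have h1 : lam * (a - b) ≤ lam * (l1norm βhat - l1norm β₀) := by
      have := hl1; nlinarith
    have h2 : lam * (l1norm βhat - l1norm β₀) ≤ lsObj x y β₀ - lsObj x y βhat := by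
      nlinarith [hm]
    have h3 : lam * (a - b) ≤ (lam / c) * (b + a) := by linarith
    have h4 : (lam / c) * (c * (a - b)) ≤ (lam / c) * (a + b) := by
      rw [show (lam / c) * (c * (a - b)) = lam * (a - b) by field_simp]
      linarith
    have hpos : 0 < lam / c := div_pos hlam hc0
    exact le_of_mul_le_mul_left h4 hpos
  rw [div_mul_eq_mul_div, le_div_iff₀ (by linarith : (0:ℝ) < c - 1)]
  nlinarith [hfin]
end

section
/- Under the setting of the previous Lasso cone property, additionally assume the restricted eigenvalue κ = κ(Q̃,T,c̄) > 0 with c̄ = (c+1)/(c−1), where Q̃ = (1/N)Σᵢ xᵢxᵢᵀ, and the basic inequality δᵀQ̃δ ≤ λ‖δ_T‖₁ holds for δ = β̂ − β₀. Then the prediction norm satisfies √(δᵀQ̃δ) ≤ λ√s/κ, where s = |T|. -/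
open Matrix Finset

/-- The empirical Gram matrix `Q̃ = (1/N) Σᵢ xᵢ xᵢᵀ`. -/
noncomputable def gram {N d : ℕ} (x : Fin N → Fin d → ℝ) :
    Matrix (Fin d) (Fin d) ℝ :=
  Matrix.of fun j k => (1 / (N : ℝ)) * ∑ i, x i j * x i k

lemma gram_eq {N d : ℕ} (x : Fin N → Fin d → ℝ) (δ : Fin d → ℝ) :
    δ ⬝ᵥ (gram x).mulVec δ
      = (1 / (N : ℝ)) * ∑ i, (∑ j, x i j * δ j) ^ 2 := by
  have h : ∀ i, (∑ j, x i j * δ j) ^ 2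
      = ∑ j, ∑ k, δ j * (x i j * x i k) * δ k := by
    intro i
    rw [sq, Finset.sum_mul_sum]
    exact Finset.sum_congr rfl fun j _ => Finset.sum_congr rfl fun k _ => by ring
  simp only [dotProduct, Matrix.mulVec, dotProduct, _root_.gram, Matrix.of_apply, h,
    Finset.mul_sum, Finset.sum_mul]
  conv_rhs => rw [Finset.sum_comm]
  refine Finset.sum_congr rfl fun j _ => ?_
  conv_rhs => rw [Finset.sum_comm]
  refine Finset.sum_congr rfl fun k _ => ?_
  exact Finset.sum_congr rfl fun i _ => by ring

/-- Prediction-norm bound for the Lasso: under the restricted eigenvalue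
condition with `c̄ = (c+1)/(c−1)` and the basic inequality
`δᵀQ̃δ ≤ λ‖δ_T‖₁`, the error `δ = β̂ − β₀` satisfies `√(δᵀQ̃δ) ≤ λ√s/κ`. -/
theorem stmt_7 {N d : ℕ} (x : Fin N → Fin d → ℝ)
    (β₀ βhat : Fin d → ℝ) (T : Finset (Fin d)) (s : ℕ) (hs : T.card = s)
    (lam c : ℝ) (hlam : 0 < lam) (hc : 1 < c)
    (κ : ℝ) (hκ : 0 < κ)
    (hRE : isREconst (gram x) T ((c + 1) / (c - 1)) κ)
    (hcone : l1norm (restr Tᶜ (βhat - β₀))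
      ≤ ((c + 1) / (c - 1)) * l1norm (restr T (βhat - β₀)))
    (hbasic : (βhat - β₀) ⬝ᵥ (gram x).mulVec (βhat - β₀)
      ≤ lam * l1norm (restr T (βhat - β₀))) :
    Real.sqrt ((βhat - β₀) ⬝ᵥ (gram x).mulVec (βhat - β₀))
      ≤ lam * Real.sqrt s / κ := by
  set δ := βhat - β₀ with hδ
  have hQ0 : 0 ≤ δ ⬝ᵥ (gram x).mulVec δ := by
    rw [gram_eq]
    exact mul_nonneg (by positivity) (Finset.sum_nonneg fun i _ => sq_nonneg _)
  have hrhs : 0 ≤ lam * Real.sqrt s / κ := by positivity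
  by_cases hzero : δ = 0
  · have : δ ⬝ᵥ (gram x).mulVec δ = 0 := by rw [hzero]; simp
    rw [this, Real.sqrt_zero]; exact hrhs
  · set r := Real.sqrt (δ ⬝ᵥ (gram x).mulVec δ) with hr
    have hr0 : 0 ≤ r := Real.sqrt_nonneg _
    have hRE' := hRE δ ⟨hzero, hcone⟩
    rw [hs] at hRE'
    have key : r * r ≤ (lam * Real.sqrt s / κ) * r := by
      rw [Real.mul_self_sqrt hQ0]
      calc δ ⬝ᵥ (gram x).mulVec δ ≤ lam * l1norm (restr T δ) := hbasic
        _ ≤ lam * (Real.sqrt s * r / κ) := by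
            apply mul_le_mul_of_nonneg_left _ hlam.le
            rw [le_div_iff₀ hκ]
            linarith [hRE']
        _ = (lam * Real.sqrt s / κ) * r := by ring
    rcases eq_or_lt_of_le hr0 with h | h
    · rw [← h]; exact hrhs
    · exact le_of_mul_le_mul_right key h
end
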